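/- Boundedness for degenerate negative semi-definite forms: let M be a real symmetric s × s matrix with nontrivial kernel such that the restriction of the quadratic form v ↦ vᵀMv to the coordinate hyperplane {v : v_s = 0} is negative definite. Then for every fixed vector b ∈ ℝˢ, the function n ↦ nᵀMn + nᵀMb is bounded above on ℝˢ. -/

import Mathlib

open Matrix

/-- Boundedness for degenerate negative semi-definite forms: if `M` is a real symmetric
matrix with nontrivial kernel whose quadratic form is negative definite on the coordinate
hyperplane where the last coordinate vanishes, then for every fixed `b` the function
`n ↦ nᵀMn + nᵀMb` is bounded above. -/
theorem bddAbove_of_degenerate_negSemidef (n : ℕ)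
    (M : Matrix (Fin (n+1)) (Fin (n+1)) ℝ)
    (hsymm : M.IsSymm)
    (hker : ∃ u : Fin (n+1) → ℝ, u ≠ 0 ∧ M.mulVec u = 0)
    (hneg : ∀ u : Fin (n+1) → ℝ, u ≠ 0 → u (Fin.last n) = 0 → u ⬝ᵥ M.mulVec u < 0)
    (b : Fin (n+1) → ℝ) :
    ∃ C : ℝ, ∀ u : Fin (n+1) → ℝ, u ⬝ᵥ M.mulVec u + u ⬝ᵥ M.mulVec b ≤ C := by
  obtain ⟨u₀, hu₀ne, hu₀⟩ := hker
  -- u₀ ⬝ᵥ M.mulVec w = 0 for all w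
  have hMsymm : Mᵀ = M := hsymm
  have hdot : ∀ w : Fin (n+1) → ℝ, u₀ ⬝ᵥ M.mulVec w = 0 := by
    intro w
    rw [dotProduct_mulVec, ← Matrix.mulVec_transpose, hMsymm, hu₀, zero_dotProduct]
  -- the last coordinate of u₀ is nonzero
  have hlast : u₀ (Fin.last n) ≠ 0 := by
    intro h
    have := hneg u₀ hu₀ne h
    rw [hu₀, dotProduct_zero] at this
    exact lt_irrefl 0 this
  -- abbreviations
  set Q : (Fin (n+1) → ℝ) → ℝ := fun v => v ⬝ᵥ M.mulVec v with hQ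
  set L : (Fin (n+1) → ℝ) → ℝ := fun v => v ⬝ᵥ M.mulVec b with hLdef
  -- bound on L
  set K : ℝ := ∑ i, |M.mulVec b i| with hK
  have hKnonneg : 0 ≤ K := Finset.sum_nonneg fun i _ => abs_nonneg _
  have hL : ∀ v : Fin (n+1) → ℝ, L v ≤ ‖v‖ * K := by
    intro v
    have : L v = ∑ i, v i * M.mulVec b i := rfl
    rw [this, hK, Finset.mul_sum]
    apply Finset.sum_le_sum
    intro i _
    calc v i * M.mulVec b i ≤ |v i * M.mulVec b i| := le_abs_self _
      _ = |v i| * |M.mulVec b i| := abs_mul _ _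
      _ ≤ ‖v‖ * |M.mulVec b i| := by
          apply mul_le_mul_of_nonneg_right _ (abs_nonneg _)
          exact norm_le_pi_norm v i
  -- Q is continuous
  have hQcont : Continuous Q := by
    have : Q = fun v => ∑ i, v i * ∑ j, M i j * v j := rfl
    rw [this]
    apply continuous_finset_sum
    intro i _
    exact (continuous_apply i).mul
      (continuous_finset_sum _ fun j _ => continuous_const.mul (continuous_apply j))
  -- homogeneity of Q
  have hQhom : ∀ (r : ℝ) (v : Fin (n+1) → ℝ), Q (r • v) = r ^ 2 * Q v := by
    intro r v
    simp only [hQ, Matrix.mulVec_smul, smul_dotProduct, dotProduct_smul, smul_eq_mul]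
    ring
  -- the sphere in the hyperplane
  set S : Set (Fin (n+1) → ℝ) := {v | v (Fin.last n) = 0 ∧ ‖v‖ = 1} with hSdef
  have hScomp : IsCompact S := by
    have h1 : S = Metric.sphere (0 : Fin (n+1) → ℝ) 1 ∩ {v | v (Fin.last n) = 0} := by
      ext v
      simp [hSdef, and_comm]
    rw [h1]
    exact (isCompact_sphere 0 1).inter_right (isClosed_eq (continuous_apply _) continuous_const)
  -- key: boundedness on the hyperplane
  have key : ∃ C : ℝ, 0 ≤ C ∧ ∀ v : Fin (n+1) → ℝ, v (Fin.last n) = 0 → Q v + L v ≤ C := by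
    by_cases hS : S.Nonempty
    · obtain ⟨v₀, hv₀S, hv₀max⟩ := hScomp.exists_isMaxOn hS hQcont.continuousOn
      have hv₀ne : v₀ ≠ 0 := by
        intro h
        have h2 : ‖v₀‖ = 1 := hv₀S.2
        rw [h, norm_zero] at h2
        exact one_ne_zero h2.symm
      have hc : Q v₀ < 0 := hneg v₀ hv₀ne hv₀S.1
      set c : ℝ := -Q v₀ with hcdef
      have hcpos : 0 < c := by linarith
      refine ⟨max 0 (K ^ 2 / (4 * c)), le_max_left _ _, ?_⟩
      intro v hv
      by_cases hvz : v = 0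
      · rw [hvz]
        simp only [hQ, hLdef, zero_dotProduct, add_zero]
        exact le_max_left _ _
      · set r : ℝ := ‖v‖ with hr
        have hrpos : 0 < r := norm_pos_iff.mpr hvz
        set w : (Fin (n+1) → ℝ) := r⁻¹ • v with hw
        have hwS : w ∈ S := by
          constructor
          · show (r⁻¹ • v) (Fin.last n) = 0
            simp [hv]
          · show ‖r⁻¹ • v‖ = 1
            rw [norm_smul, norm_inv, Real.norm_eq_abs, abs_of_pos hrpos, ← hr]
            field_simp
        have hvrw : v = r • w := by
          rw [hw, smul_smul, mul_inv_cancel₀ (ne_of_gt hrpos), one_smul]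
        have hQv : Q v ≤ -c * r ^ 2 := by
          have h1 : Q w ≤ Q v₀ := hv₀max hwS
          have h2 : Q v = r ^ 2 * Q w := by rw [hvrw, hQhom]
          nlinarith [sq_nonneg r, hrpos]
        have hLv : L v ≤ r * K := by
          have := hL v
          rw [← hr] at this
          linarith
        have h4c : 0 < 4 * c := by linarith
        have hfin : Q v + L v ≤ K ^ 2 / (4 * c) := by
          rw [le_div_iff₀ h4c]
          nlinarith [sq_nonneg (2 * c * r - K), hQv, hLv, h4c]
        exact hfin.trans (le_max_right _ _)
    · -- S empty: hyperplane is {0}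
      refine ⟨0, le_refl 0, ?_⟩
      intro v hv
      by_cases hvz : v = 0
      · rw [hvz]; simp [hQ, hLdef]
      · exfalso
        apply hS
        have hrpos : 0 < ‖v‖ := norm_pos_iff.mpr hvz
        refine ⟨‖v‖⁻¹ • v, ?_, ?_⟩
        · show (‖v‖⁻¹ • v) (Fin.last n) = 0
          simp [hv]
        · show ‖‖v‖⁻¹ • v‖ = 1
          rw [norm_smul, norm_inv, norm_norm]
          field_simp
  obtain ⟨C, hCnn, hC⟩ := key
  refine ⟨C, ?_⟩
  intro u
  set t : ℝ := u (Fin.last n) / u₀ (Fin.last n) with ht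
  set v : Fin (n+1) → ℝ := u - t • u₀ with hv
  have hvlast : v (Fin.last n) = 0 := by
    show u (Fin.last n) - t * u₀ (Fin.last n) = 0
    rw [ht]
    field_simp
    ring
  -- Q u = Q v
  have hQeq : Q u = Q v := by
    have hMv : M.mulVec v = M.mulVec u := by
      rw [hv, Matrix.mulVec_sub, Matrix.mulVec_smul, hu₀, smul_zero, sub_zero]
    have : Q v = (u - t • u₀) ⬝ᵥ M.mulVec u := by
      show v ⬝ᵥ M.mulVec v = _
      rw [hMv, hv]
    rw [this, sub_dotProduct, smul_dotProduct, hdot u, smul_eq_mul, mul_zero, sub_zero]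
  have hLeq : L u = L v := by
    have : L v = (u - t • u₀) ⬝ᵥ M.mulVec b := rfl
    rw [this, sub_dotProduct, smul_dotProduct, hdot b, smul_eq_mul, mul_zero, sub_zero]
  calc u ⬝ᵥ M.mulVec u + u ⬝ᵥ M.mulVec b = Q v + L v := by rw [← hQeq, ← hLeq]
    _ ≤ C := hC v hvlast
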